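/- Let 𝐦 = (m_1,...,m_n) be positive integers with m = Σ m_i, and let 𝐦' be 𝐦 with an extra letter n+1 occurring twice. Then A_{𝐦'}(x,y) = G(A_𝐦(x,y)), where G = xy²(∂_x + ∂_y) + (x²y²/2)(∂_x² + ∂_y²) + x²y² ∂_x∂_y and A_𝐦(x,y) = Σ_{π ∈ 𝔖_𝐦} x^{des(π)} y^{m+1-des(π)}. -/

import Mathlib

open MvPolynomial

/-- Number of descents in `a :: rest`, counting consecutive pairs. -/
def desAux : List ℕ → ℕ
  | a :: b :: t => (if b < a then 1 else 0) + desAux (b :: t)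
  | _ => 0

/-- The descent number of a word `w = π₁…π_m`, with the boundary convention
`π₀ = π_{m+1} = 0`. -/
def des (w : List ℕ) : ℕ := desAux (0 :: (w ++ [0]))

/-- The list of all distinct arrangements (multipermutations) of a multiset. -/
noncomputable def arrangements (M : Multiset ℕ) : List (List ℕ) :=
  M.toList.permutations.dedup

/-- The multiset `{1^{m₁}, 2^{m₂}, …, n^{m_n}}` encoded by the list of
multiplicities `ms = [m₁, …, m_n]`. -/
def msetOf (ms : List ℕ) : Multiset ℕ :=
  ((List.range ms.length).flatMap fun i => List.replicate (ms.getD i 0) (i + 1) : List ℕ)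

/-- The homogenized multiset Eulerian polynomial
`A_𝐦(x,y) = Σ_π x^{des π} y^{m+1-des π}`. -/
noncomputable def Abi (ms : List ℕ) : MvPolynomial (Fin 2) ℚ :=
  ((arrangements (msetOf ms)).map fun w =>
    X 0 ^ des w * X 1 ^ ((msetOf ms).card + 1 - des w)).sum

/-- The multiset Eulerian polynomial `A_𝐦(x) = Σ_π x^{des π}`. -/
noncomputable def Auni (ms : List ℕ) : Polynomial ℚ :=
  ((arrangements (msetOf ms)).map fun w => Polynomial.X ^ des w).sum

/-- The Eulerian operator `G = xy²(∂_x+∂_y) + (x²y²/2)(∂_x²+∂_y²) + x²y² ∂_x∂_y`. -/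
noncomputable def Gop (f : MvPolynomial (Fin 2) ℚ) : MvPolynomial (Fin 2) ℚ :=
  X 0 * X 1 ^ 2 * (pderiv (0 : Fin 2) f + pderiv (1 : Fin 2) f)
    + C (1 / 2 : ℚ) * (X 0 ^ 2 * X 1 ^ 2) *
        (pderiv (0 : Fin 2) (pderiv (0 : Fin 2) f) + pderiv (1 : Fin 2) (pderiv (1 : Fin 2) f))
    + X 0 ^ 2 * X 1 ^ 2 * pderiv (0 : Fin 2) (pderiv (1 : Fin 2) f)

abbrev M2 := MvPolynomial (Fin 2) ℚ

/-! ### Auxiliary definitions -/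

def ins2 (w : List ℕ) (i j N : ℕ) : List ℕ := (w.insertIdx j N).insertIdx i N

def gl (w : List ℕ) (k : ℕ) : ℕ := (0 :: w).getD k 0
def gr (w : List ℕ) (k : ℕ) : ℕ := (w ++ [0]).getD k 0
def dsc (w : List ℕ) (k : ℕ) : ℕ := if gr w k < gl w k then 1 else 0

lemma dsc_le_one (w k) : dsc w k ≤ 1 := by unfold dsc; split <;> omega

lemma insertIdx_append_left : ∀ (k : ℕ) (w : List ℕ) (t : List ℕ) (x : ℕ), k ≤ w.length →
    (w ++ t).insertIdx k x = w.insertIdx k x ++ t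
  | 0, w, t, x, _ => rfl
  | (k+1), a :: w, t, x, h => by
      simp only [List.cons_append, List.insertIdx_succ_cons]
      rw [insertIdx_append_left k w t x (by simpa using h)]
  | (k+1), [], t, x, h => by simp at h

lemma core : ∀ (k : ℕ) (l : List ℕ) (a N : ℕ), k < l.length →
    desAux (a :: l.insertIdx k N) + (if l.getD k 0 < (a :: l).getD k 0 then 1 else 0)
      = desAux (a :: l) + (if N < (a :: l).getD k 0 then 1 else 0)
        + (if l.getD k 0 < N then 1 else 0)
  | 0, b :: t, a, N, _ => by
      simp only [List.insertIdx_zero, desAux, List.getD_cons_zero]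
      omega
  | (k+1), b :: t, a, N, h => by
      have ih := core k t b N (by simpa using h)
      simp only [List.insertIdx_succ_cons, desAux, List.getD_cons_succ]
      simp only [List.insertIdx] at ih ⊢
      omega

lemma gl_eq_getD_aux {w : List ℕ} {k : ℕ} (hk : k ≤ w.length) :
    (0 :: (w ++ [0])).getD k 0 = gl w k := by
  show ((0 :: w) ++ [0]).getD k 0 = _
  rw [List.getD_append _ _ _ _ (by simpa using Nat.lt_succ_of_le hk)]
  rfl

lemma des_insertIdx {w : List ℕ} {k N : ℕ} (hk : k ≤ w.length) :
    des (w.insertIdx k N) + dsc w k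
      = des w + (if N < gl w k then 1 else 0) + (if gr w k < N then 1 else 0) := by
  have h := core k (w ++ [0]) 0 N (by simp; omega)
  rw [gl_eq_getD_aux hk] at h
  unfold des dsc gr
  rw [insertIdx_append_left k w [0] N hk] at h
  exact h

lemma gl_lt {w : List ℕ} {N : ℕ} (hw : ∀ x ∈ w, x < N) (hN : 0 < N) (k : ℕ) : gl w k < N := by
  unfold gl
  rcases lt_or_ge k (0 :: w).length with h | h
  · rw [List.getD_eq_getElem _ _ h]
    have := List.getElem_mem h
    rcases List.mem_cons.1 this with h' | h'
    · omega
    · exact hw _ h'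
  · rw [List.getD_eq_default _ _ h]; exact hN

lemma gr_lt {w : List ℕ} {N : ℕ} (hw : ∀ x ∈ w, x < N) (hN : 0 < N) (k : ℕ) : gr w k < N := by
  unfold gr
  rcases lt_or_ge k (w ++ [0]).length with h | h
  · rw [List.getD_eq_getElem _ _ h]
    have := List.getElem_mem h
    rcases List.mem_append.1 this with h' | h'
    · exact hw _ h'
    · simp at h'; omega
  · rw [List.getD_eq_default _ _ h]; exact hN

lemma des_insertIdx' {w : List ℕ} {k N : ℕ} (hw : ∀ x ∈ w, x < N) (hN : 0 < N)
    (hk : k ≤ w.length) : des (w.insertIdx k N) + dsc w k = des w + 1 := by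
  have h := des_insertIdx (N := N) hk
  rw [if_neg (by have := gl_lt hw hN k; omega), if_pos (gr_lt hw hN k)] at h
  omega
lemma gl_insertIdx {w : List ℕ} {i j N : ℕ} (hij : i ≤ j) (hj : j ≤ w.length) :
    gl (w.insertIdx j N) i = gl w i := by
  unfold gl
  match i with
  | 0 => rfl
  | (i+1) =>
    simp only [List.getD_cons_succ]
    have h1 : i < w.length := by omega
    have h2 : i < (w.insertIdx j N).length := by rw [List.length_insertIdx_of_le_length hj]; omega
    rw [List.getD_eq_getElem _ _ h2, List.getD_eq_getElem _ _ h1,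
      List.getElem_insertIdx_of_lt (by omega) h2]

lemma gr_insertIdx_lt {w : List ℕ} {i j N : ℕ} (hij : i < j) (hj : j ≤ w.length) :
    gr (w.insertIdx j N) i = gr w i := by
  unfold gr
  have h1 : i < w.length := by omega
  have h2 : i < (w.insertIdx j N).length := by rw [List.length_insertIdx_of_le_length hj]; omega
  rw [List.getD_append _ _ _ _ h2, List.getD_append _ _ _ _ h1,
    List.getD_eq_getElem _ _ h2, List.getD_eq_getElem _ _ h1,
    List.getElem_insertIdx_of_lt hij h2]

lemma gr_insertIdx_self {w : List ℕ} {j N : ℕ} (hj : j ≤ w.length) :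
    gr (w.insertIdx j N) j = N := by
  unfold gr
  have h2 : j < (w.insertIdx j N).length := by rw [List.length_insertIdx_of_le_length hj]; omega
  rw [List.getD_append _ _ _ _ h2, List.getD_eq_getElem _ _ h2,
    List.getElem_insertIdx_self h2]

lemma des_ins2 {w : List ℕ} {i j N : ℕ} (hw : ∀ x ∈ w, x < N) (hN : 0 < N)
    (hij : i ≤ j) (hj : j ≤ w.length) :
    des (ins2 w i j N) = des w + (1 - dsc w j) + (if i < j then 1 - dsc w i else 0) := by
  set w1 := w.insertIdx j N with hw1
  have hlen : w1.length = w.length + 1 := List.length_insertIdx_of_le_length hj N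
  have h1 : des w1 + dsc w j = des w + 1 := des_insertIdx' hw hN hj
  have hdj := dsc_le_one w j
  have h2 := des_insertIdx (w := w1) (k := i) (N := N) (by omega)
  rw [gl_insertIdx hij hj] at h2
  rw [if_neg (by have := gl_lt hw hN i; omega)] at h2
  rcases Nat.lt_or_ge i j with hlt | hge
  · rw [gr_insertIdx_lt hlt hj] at h2
    rw [if_pos (gr_lt hw hN i)] at h2
    have hdi := dsc_le_one w i
    have hd : dsc w1 i = dsc w i := by
      unfold dsc
      rw [gl_insertIdx hij hj, gr_insertIdx_lt hlt hj]
    rw [hd] at h2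
    unfold ins2
    show des (w1.insertIdx i N) = _
    simp only [if_pos hlt]
    omega
  · have hij' : i = j := by omega
    subst hij'
    have hd : dsc w1 i = 0 := by
      unfold dsc
      rw [gl_insertIdx hij hj, gr_insertIdx_self hj]
      exact if_neg (by have := gl_lt hw hN i; omega)
    rw [hd, gr_insertIdx_self hj, if_neg (lt_irrefl N)] at h2
    unfold ins2
    show des (w1.insertIdx i N) = _
    simp only [if_neg (lt_irrefl i)]
    omega

lemma desAux_cons_eq_sum : ∀ (l : List ℕ) (a : ℕ),
    desAux (a :: l) = ∑ k ∈ Finset.range l.length,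
      (if l.getD k 0 < (a :: l).getD k 0 then 1 else 0)
  | [], a => rfl
  | b :: t, a => by
    rw [show desAux (a :: b :: t) = (if b < a then 1 else 0) + desAux (b :: t) from rfl,
      desAux_cons_eq_sum t b]
    rw [show (b :: t).length = t.length + 1 from rfl, Finset.sum_range_succ']
    simp only [List.getD_cons_succ, List.getD_cons_zero]
    omega

lemma des_eq_sum (w : List ℕ) : des w = ∑ k ∈ Finset.range (w.length + 1), dsc w k := by
  unfold des
  rw [desAux_cons_eq_sum]
  have : (w ++ [0]).length = w.length + 1 := by simp
  rw [this]
  apply Finset.sum_congr rfl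
  intro k hk
  rw [Finset.mem_range] at hk
  rw [gl_eq_getD_aux (by omega)]
  rfl

lemma des_le (w : List ℕ) : des w ≤ w.length + 1 := by
  rw [des_eq_sum]
  calc ∑ k ∈ Finset.range (w.length + 1), dsc w k
      ≤ ∑ _k ∈ Finset.range (w.length + 1), 1 := Finset.sum_le_sum fun k _ => dsc_le_one w k
    _ = w.length + 1 := by simp

lemma exists_insertIdx {N : ℕ} : ∀ {l : List ℕ}, l.count N = 1 →
    ∃ (v : List ℕ) (q : ℕ), q ≤ v.length ∧ N ∉ v ∧ l = v.insertIdx q N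
  | [], h => by simp at h
  | a :: t, h => by
    rcases eq_or_ne a N with rfl | ha
    · refine ⟨t, 0, Nat.zero_le _, ?_, rfl⟩
      simp only [List.count_cons_self] at h
      exact List.count_eq_zero.1 (by omega)
    · have ht : t.count N = 1 := by
        rwa [List.count_cons_of_ne ha] at h
      obtain ⟨v, q, hq, hv, rfl⟩ := exists_insertIdx ht
      refine ⟨a :: v, q + 1, by simpa using hq, ?_, by simp [List.insertIdx_succ_cons]⟩
      intro hmem
      rcases List.mem_cons.1 hmem with h' | h'
      · exact ha h'.symm
      · exact hv h'

lemma ins2_cons (a : ℕ) (w : List ℕ) (i j N : ℕ) :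
    ins2 (a :: w) (i + 1) (j + 1) N = a :: ins2 w i j N := by
  unfold ins2
  rw [List.insertIdx_succ_cons, List.insertIdx_succ_cons]

lemma exists_ins2 {N : ℕ} : ∀ {l : List ℕ}, l.count N = 2 →
    ∃ (w : List ℕ) (i j : ℕ), i ≤ j ∧ j ≤ w.length ∧ N ∉ w ∧ l = ins2 w i j N
  | [], h => by simp at h
  | a :: t, h => by
    rcases eq_or_ne a N with ha | ha
    · have ht : t.count N = 1 := by
        rw [ha] at h; simp only [List.count_cons_self] at h; omega
      obtain ⟨v, q, hq, hv, rfl⟩ := exists_insertIdx ht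
      exact ⟨v, 0, q, Nat.zero_le _, hq, hv, by rw [ha]; rfl⟩
    · have ht : t.count N = 2 := by
        rwa [List.count_cons_of_ne ha] at h
      obtain ⟨w, i, j, hij, hj, hw, rfl⟩ := exists_ins2 ht
      refine ⟨a :: w, i + 1, j + 1, by omega, by simpa using hj, ?_, (ins2_cons a w i j N).symm⟩
      intro hmem
      rcases List.mem_cons.1 hmem with h' | h'
      · exact ha h'.symm
      · exact hw h'

lemma insertIdx_inj {N : ℕ} : ∀ {j : ℕ} {w v : List ℕ} {q : ℕ}, N ∉ w → N ∉ v →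
    j ≤ w.length → q ≤ v.length → w.insertIdx j N = v.insertIdx q N → w = v ∧ j = q
  | 0, w, v, 0, _, _, _, _, h => by
      simp only [List.insertIdx_zero] at h
      exact ⟨by simpa using h, rfl⟩
  | 0, w, b :: v, (q+1), hw, hv, _, hq, h => by
      rw [List.insertIdx_zero, List.insertIdx_succ_cons] at h
      obtain ⟨rfl, -⟩ := List.cons_eq_cons.mp h
      exact absurd (List.mem_cons_self : N ∈ N :: v) hv
  | (j+1), a :: w, v, 0, hw, hv, hj, _, h => by
      rw [List.insertIdx_zero, List.insertIdx_succ_cons] at h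
      obtain ⟨rfl, -⟩ := List.cons_eq_cons.mp h
      exact absurd (List.mem_cons_self : a ∈ a :: w) hw
  | (j+1), a :: w, b :: v, (q+1), hw, hv, hj, hq, h => by
      rw [List.insertIdx_succ_cons, List.insertIdx_succ_cons] at h
      obtain ⟨rfl, h2⟩ := List.cons_eq_cons.mp h
      have := insertIdx_inj (N := N) (fun hx => hw (List.mem_cons_of_mem _ hx))
        (fun hx => hv (List.mem_cons_of_mem _ hx)) (by simpa using hj) (by simpa using hq) h2
      exact ⟨by rw [this.1], by rw [this.2]⟩
  | 0, w, [], (q+1), _, _, _, hq, _ => by simp at hq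
  | (j+1), [], v, q, _, _, hj, _, _ => by simp at hj

lemma insertIdx_same_inj {N : ℕ} : ∀ (i : ℕ) (l1 l2 : List ℕ), i ≤ l1.length → i ≤ l2.length →
    l1.insertIdx i N = l2.insertIdx i N → l1 = l2
  | 0, l1, l2, _, _, h => by
      simp only [List.insertIdx_zero] at h
      exact (List.cons_eq_cons.mp h).2
  | (i+1), a :: l1, b :: l2, h1, h2, h => by
      rw [List.insertIdx_succ_cons, List.insertIdx_succ_cons] at h
      obtain ⟨rfl, h'⟩ := List.cons_eq_cons.mp h
      rw [insertIdx_same_inj i l1 l2 (by simpa using h1) (by simpa using h2) h']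
  | (i+1), [], l2, h1, _, _ => by simp at h1
  | (i+1), a :: l1, [], _, h2, _ => by simp at h2

lemma ins2_inj {N : ℕ} : ∀ {i : ℕ} {w v : List ℕ} {j p q : ℕ}, N ∉ w → N ∉ v →
    i ≤ j → j ≤ w.length → p ≤ q → q ≤ v.length →
    ins2 w i j N = ins2 v p q N → w = v ∧ i = p ∧ j = q
  | 0, w, v, j, 0, q, hw, hv, hij, hj, hp, hq, h => by
      have h' : w.insertIdx j N = v.insertIdx q N :=
        (List.cons_eq_cons.mp (h : N :: w.insertIdx j N = N :: v.insertIdx q N)).2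
      obtain ⟨e1, e2⟩ := insertIdx_inj hw hv hj hq h'
      exact ⟨e1, rfl, e2⟩
  | 0, w, v, j, (p+1), q, hw, hv, hij, hj, hp, hq, h => by
      rcases v with - | ⟨b, v'⟩
      · simp at hq; omega
      rcases q with - | q'
      · omega
      rw [ins2_cons] at h
      obtain ⟨rfl, -⟩ := List.cons_eq_cons.mp
        (h : N :: w.insertIdx j N = b :: ins2 v' p q' N)
      exact absurd (List.mem_cons_self : N ∈ N :: v') hv
  | (i+1), w, v, j, 0, q, hw, hv, hij, hj, hp, hq, h => by
      rcases w with - | ⟨a, w'⟩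
      · simp at hj; omega
      rcases j with - | j'
      · omega
      rw [ins2_cons] at h
      obtain ⟨rfl, -⟩ := List.cons_eq_cons.mp
        (h : a :: ins2 w' i j' N = N :: v.insertIdx q N)
      exact absurd (List.mem_cons_self : a ∈ a :: w') hw
  | (i+1), w, v, j, (p+1), q, hw, hv, hij, hj, hp, hq, h => by
      rcases w with - | ⟨a, w'⟩
      · simp at hj; omega
      rcases v with - | ⟨b, v'⟩
      · simp at hq; omega
      rcases j with - | j'
      · omega
      rcases q with - | q'
      · omega
      rw [ins2_cons, ins2_cons] at h
      obtain ⟨rfl, h'⟩ := List.cons_eq_cons.mp h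
      obtain ⟨e1, e2, e3⟩ := ins2_inj (fun hx => hw (List.mem_cons_of_mem _ hx))
        (fun hx => hv (List.mem_cons_of_mem _ hx)) (by omega) (by simpa using hj)
        (by omega) (by simpa using hq) h'
      exact ⟨by rw [e1], by omega, by omega⟩

lemma pd0 (d e : ℕ) : pderiv (0:Fin 2) ((X 0 : MvPolynomial (Fin 2) ℚ)^d * X 1^e)
    = C (d:ℚ) * (X 0^(d-1) * X 1^e) := by
  rw [pderiv_mul, pderiv_pow, pderiv_pow, pderiv_X_self, pderiv_X_of_ne (by decide)]
  simp [nsmul_eq_mul]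
  ring

lemma pd1 (d e : ℕ) : pderiv (1:Fin 2) ((X 0 : MvPolynomial (Fin 2) ℚ)^d * X 1^e)
    = C (e:ℚ) * (X 0^d * X 1^(e-1)) := by
  rw [pderiv_mul, pderiv_pow, pderiv_pow, pderiv_X_self, pderiv_X_of_ne (by decide)]
  simp [nsmul_eq_mul]
  ring


lemma pd0' (d e : ℕ) : pderiv (0:Fin 2) ((X 0 : M2)^d * X 1^e)
    = (d : M2) * (X 0^(d-1) * X 1^e) := by
  rw [pd0, map_natCast (C : ℚ →+* M2)]

lemma pd1' (d e : ℕ) : pderiv (1:Fin 2) ((X 0 : M2)^d * X 1^e)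
    = (e : M2) * (X 0^d * X 1^(e-1)) := by
  rw [pd1, map_natCast (C : ℚ →+* M2)]

lemma pd00 (d e : ℕ) : pderiv (0:Fin 2) (pderiv (0:Fin 2) ((X 0 : M2)^d * X 1^e))
    = (d : M2) * ((d-1 : ℕ) : M2) * (X 0^(d-2) * X 1^e) := by
  rw [pd0, pderiv_C_mul, pd0, Nat.sub_sub, map_natCast (C : ℚ →+* M2), map_natCast (C : ℚ →+* M2)]
  ring

lemma pd11 (d e : ℕ) : pderiv (1:Fin 2) (pderiv (1:Fin 2) ((X 0 : M2)^d * X 1^e))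
    = (e : M2) * ((e-1 : ℕ) : M2) * (X 0^d * X 1^(e-2)) := by
  rw [pd1, pderiv_C_mul, pd1, Nat.sub_sub, map_natCast (C : ℚ →+* M2), map_natCast (C : ℚ →+* M2)]
  ring

lemma pd01 (d e : ℕ) : pderiv (0:Fin 2) (pderiv (1:Fin 2) ((X 0 : M2)^d * X 1^e))
    = (d : M2) * (e : M2) * (X 0^(d-1) * X 1^(e-1)) := by
  rw [pd1, pderiv_C_mul, pd0, map_natCast (C : ℚ →+* M2), map_natCast (C : ℚ →+* M2)]
  ring

lemma hH : (2 : M2) * C (1/2 : ℚ) = 1 := by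
  rw [← map_ofNat (C : ℚ →+* M2) 2, ← map_mul]
  norm_num

lemma Gop_mono (d e : ℕ) :
    Gop ((X 0 : M2)^d * X 1^e)
      = (X 0^d * X 1^e) *
        (X 1 * ((d : M2) * X 1 + (e : M2) * X 0)
          + C (1/2 : ℚ) * (((d : M2) * X 1 + (e : M2) * X 0)^2
              - ((d : M2) * X 1^2 + (e : M2) * X 0^2))) := by
  unfold Gop
  rw [pd00, pd11, pd01, pd0', pd1']
  rcases d with _ | _ | d
  · rcases e with _ | _ | e <;> push_cast <;> ring
  · rcases e with _ | _ | e
    · push_cast; ring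
    · push_cast; linear_combination (-(X 0^2 * X 1^2 : M2)) * hH
    · push_cast; linear_combination (-(((e:M2)+2) * X 0^2 * X 1^(e+3))) * hH
  · rcases e with _ | _ | e
    · push_cast; ring
    · push_cast; linear_combination (-((((d:M2)+2)) * X 0^(d+3) * X 1^2)) * hH
    · push_cast; linear_combination (-(((d:M2)+2) * ((e:M2)+2) * X 0^(d+3) * X 1^(e+3))) * hH

open Finset in
lemma sum_indicator_card (s : Finset ℕ) (c : ℕ → ℕ) (hc : ∀ k, c k ≤ 1) :
    ∑ k ∈ s, c k = (s.filter (fun k => c k = 1)).card := by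
  rw [Finset.card_eq_sum_ones, Finset.sum_filter]
  exact Finset.sum_congr rfl fun k _ => by have := hc k; split <;> omega

open Finset in
lemma q_sum (m d : ℕ) (c : ℕ → ℕ) (hc : ∀ k, c k ≤ 1)
    (hd : ∑ k ∈ Finset.range (m+1), c k = d) :
    ∑ k ∈ Finset.range (m+1), ((X 0 : M2) ^ (1 - c k) * X 1 ^ c k)
      = (d : M2) * X 1 + ((m+1-d : ℕ) : M2) * X 0 := by
  have hdm : d ≤ m + 1 := by
    rw [← hd]
    calc ∑ k ∈ Finset.range (m+1), c k ≤ ∑ _k ∈ Finset.range (m+1), 1 :=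
      Finset.sum_le_sum fun k _ => hc k
    _ = m + 1 := by simp
  have h1 : ∀ k ∈ Finset.range (m+1), (X 0 : M2) ^ (1 - c k) * X 1 ^ c k
      = if c k = 1 then X 1 else X 0 := by
    intro k _
    have := hc k
    interval_cases h : c k <;> simp
  rw [Finset.sum_congr rfl h1, Finset.sum_ite, Finset.sum_const, Finset.sum_const]
  rw [← sum_indicator_card _ c hc, hd]
  have h2 : (Finset.filter (fun k => ¬ c k = 1) (Finset.range (m+1))).card = m + 1 - d := by
    have := Finset.card_filter_add_card_filter_not (s := Finset.range (m+1))
      (p := fun k => c k = 1)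
    rw [← sum_indicator_card _ c hc, hd] at this
    simp only [Finset.card_range] at this
    omega
  rw [h2, nsmul_eq_mul, nsmul_eq_mul]

open Finset in
lemma qsq_sum (m d : ℕ) (c : ℕ → ℕ) (hc : ∀ k, c k ≤ 1)
    (hd : ∑ k ∈ Finset.range (m+1), c k = d) :
    ∑ k ∈ Finset.range (m+1), ((X 0 : M2) ^ (1 - c k) * X 1 ^ c k)^2
      = (d : M2) * X 1^2 + ((m+1-d : ℕ) : M2) * X 0^2 := by
  have h1 : ∀ k ∈ Finset.range (m+1), ((X 0 : M2) ^ (1 - c k) * X 1 ^ c k)^2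
      = if c k = 1 then X 1^2 else X 0^2 := by
    intro k _
    have := hc k
    interval_cases h : c k <;> simp
  rw [Finset.sum_congr rfl h1, Finset.sum_ite, Finset.sum_const, Finset.sum_const]
  rw [← sum_indicator_card _ c hc, hd]
  have h2 : (Finset.filter (fun k => ¬ c k = 1) (Finset.range (m+1))).card = m + 1 - d := by
    have := Finset.card_filter_add_card_filter_not (s := Finset.range (m+1))
      (p := fun k => c k = 1)
    rw [← sum_indicator_card _ c hc, hd] at this
    simp only [Finset.card_range] at this
    omega
  rw [h2, nsmul_eq_mul, nsmul_eq_mul]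

open Finset in
lemma strict_sum (m d : ℕ) (c : ℕ → ℕ) (hc : ∀ k, c k ≤ 1)
    (hd : ∑ k ∈ Finset.range (m+1), c k = d) :
    (2:M2) * ∑ p ∈ (Finset.range (m+1) ×ˢ Finset.range (m+1)).filter (fun p => p.1 < p.2),
        ((X 0 : M2) ^ (1 - c p.1) * X 1 ^ c p.1) * (X 0 ^ (1 - c p.2) * X 1 ^ c p.2)
      = ((d : M2) * X 1 + ((m+1-d : ℕ) : M2) * X 0)^2
        - ((d : M2) * X 1^2 + ((m+1-d : ℕ) : M2) * X 0^2) := by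
  set s := Finset.range (m+1)
  set q : ℕ → M2 := fun k => (X 0 : M2) ^ (1 - c k) * X 1 ^ c k with hq
  have hS : ((d : M2) * X 1 + ((m+1-d : ℕ) : M2) * X 0) = ∑ k ∈ s, q k :=
    (q_sum m d c hc hd).symm
  have hT : ((d : M2) * X 1^2 + ((m+1-d : ℕ) : M2) * X 0^2) = ∑ k ∈ s, (q k)^2 :=
    (qsq_sum m d c hc hd).symm
  have hsq : (∑ k ∈ s, q k)^2 = ∑ p ∈ s ×ˢ s, q p.1 * q p.2 := by
    rw [sq, Finset.sum_mul_sum, ← Finset.sum_product']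
  have e1 := Finset.sum_filter_add_sum_filter_not (s ×ˢ s) (fun p => p.1 < p.2)
    (fun p => q p.1 * q p.2)
  have e2 := Finset.sum_filter_add_sum_filter_not
    ((s ×ˢ s).filter (fun p => ¬ p.1 < p.2)) (fun p => p.2 < p.1) (fun p => q p.1 * q p.2)
  have e3 : ((s ×ˢ s).filter (fun p => ¬ p.1 < p.2)).filter (fun p => p.2 < p.1)
      = (s ×ˢ s).filter (fun p => p.2 < p.1) := by
    rw [Finset.filter_filter]
    exact Finset.filter_congr fun p _ => by constructor <;> (intro; omega)
  have e4 : ((s ×ˢ s).filter (fun p => ¬ p.1 < p.2)).filter (fun p => ¬ p.2 < p.1)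
      = (s ×ˢ s).filter (fun p => p.1 = p.2) := by
    rw [Finset.filter_filter]
    exact Finset.filter_congr fun p _ => by constructor <;> (intro; omega)
  have e5 : ∑ p ∈ (s ×ˢ s).filter (fun p => p.2 < p.1), q p.1 * q p.2
      = ∑ p ∈ (s ×ˢ s).filter (fun p => p.1 < p.2), q p.1 * q p.2 := by
    apply Finset.sum_nbij' (i := Prod.swap) (j := Prod.swap)
    · rintro ⟨a, b⟩ hp
      simp only [Finset.mem_filter, Finset.mem_product] at hp ⊢
      exact ⟨⟨hp.1.2, hp.1.1⟩, hp.2⟩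
    · rintro ⟨a, b⟩ hp
      simp only [Finset.mem_filter, Finset.mem_product] at hp ⊢
      exact ⟨⟨hp.1.2, hp.1.1⟩, hp.2⟩
    · rintro ⟨a, b⟩ _; rfl
    · rintro ⟨a, b⟩ _; rfl
    · rintro ⟨a, b⟩ _; exact mul_comm _ _
  have e6 : ∑ p ∈ (s ×ˢ s).filter (fun p => p.1 = p.2), q p.1 * q p.2
      = ∑ k ∈ s, (q k)^2 := by
    apply Finset.sum_nbij' (i := fun p => p.1) (j := fun k => (k, k))
    · rintro ⟨a, b⟩ hp
      simp only [Finset.mem_filter, Finset.mem_product] at hp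
      exact hp.1.1
    · intro k hk
      simp only [Finset.mem_filter, Finset.mem_product]
      exact ⟨⟨hk, hk⟩, trivial⟩
    · rintro ⟨a, b⟩ hp
      simp only [Finset.mem_filter, Finset.mem_product] at hp
      simp [hp.2]
    · intro k hk; rfl
    · rintro ⟨a, b⟩ hp
      simp only [Finset.mem_filter, Finset.mem_product] at hp
      simp [sq, ← hp.2]
  rw [hS, hT, hsq]
  rw [e3, e4, e5, e6] at e2
  linear_combination e1 + e2

open Finset in
lemma pair_sum (m d : ℕ) (c : ℕ → ℕ) (hc : ∀ k, c k ≤ 1)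
    (hd : ∑ k ∈ Finset.range (m+1), c k = d) :
    ∑ p ∈ (Finset.range (m+1) ×ˢ Finset.range (m+1)).filter (fun p => p.1 ≤ p.2),
      ((X 0 : M2) ^ (d + (1 - c p.2) + (if p.1 < p.2 then 1 - c p.1 else 0))
        * X 1 ^ ((m+3) - (d + (1 - c p.2) + (if p.1 < p.2 then 1 - c p.1 else 0))))
      = Gop ((X 0 : M2) ^ d * X 1 ^ (m+1-d)) := by
  have hdm : d ≤ m + 1 := by
    rw [← hd]
    calc ∑ k ∈ Finset.range (m+1), c k ≤ ∑ _k ∈ Finset.range (m+1), 1 :=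
      Finset.sum_le_sum fun k _ => hc k
    _ = m + 1 := by simp
  set s := Finset.range (m+1) with hs
  set q : ℕ → M2 := fun k => (X 0 : M2) ^ (1 - c k) * X 1 ^ c k with hq
  set P := (s ×ˢ s).filter (fun p => p.1 ≤ p.2) with hP
  have e1 := Finset.sum_filter_add_sum_filter_not P (fun p => p.1 < p.2)
    (fun p => (X 0 : M2) ^ (d + (1 - c p.2) + (if p.1 < p.2 then 1 - c p.1 else 0))
        * X 1 ^ ((m+3) - (d + (1 - c p.2) + (if p.1 < p.2 then 1 - c p.1 else 0))))
  have e3 : P.filter (fun p => p.1 < p.2) = (s ×ˢ s).filter (fun p => p.1 < p.2) := by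
    rw [hP, Finset.filter_filter]
    exact Finset.filter_congr fun p _ => by constructor <;> (intro; omega)
  have e4 : P.filter (fun p => ¬ p.1 < p.2) = (s ×ˢ s).filter (fun p => p.1 = p.2) := by
    rw [hP, Finset.filter_filter]
    exact Finset.filter_congr fun p _ => by constructor <;> (intro; omega)
  -- strict part
  have estrict : ∑ p ∈ (s ×ˢ s).filter (fun p => p.1 < p.2),
      ((X 0 : M2) ^ (d + (1 - c p.2) + (if p.1 < p.2 then 1 - c p.1 else 0))
        * X 1 ^ ((m+3) - (d + (1 - c p.2) + (if p.1 < p.2 then 1 - c p.1 else 0))))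
      = (X 0 ^ d * X 1 ^ (m+1-d)) * ∑ p ∈ (s ×ˢ s).filter (fun p => p.1 < p.2),
          q p.1 * q p.2 := by
    rw [Finset.mul_sum]
    apply Finset.sum_congr rfl
    rintro ⟨i, j⟩ hp
    simp only [Finset.mem_filter, Finset.mem_product] at hp
    rw [if_pos hp.2]
    have hci := hc i
    have hcj := hc j
    have he1 : d + (1 - c j) + (1 - c i) ≤ m + 3 := by omega
    have he2 : (m+3) - (d + (1 - c j) + (1 - c i)) = (m+1-d) + c i + c j := by omega
    rw [he2, hq]
    simp only []
    rw [show d + (1 - c j) + (1 - c i) = d + ((1 - c i) + (1 - c j)) by omega]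
    rw [pow_add, pow_add, pow_add, pow_add]
    ring
  -- diagonal part
  have ediag : ∑ p ∈ (s ×ˢ s).filter (fun p => p.1 = p.2),
      ((X 0 : M2) ^ (d + (1 - c p.2) + (if p.1 < p.2 then 1 - c p.1 else 0))
        * X 1 ^ ((m+3) - (d + (1 - c p.2) + (if p.1 < p.2 then 1 - c p.1 else 0))))
      = (X 0 ^ d * X 1 ^ (m+1-d)) * (X 1 * ∑ k ∈ s, q k) := by
    rw [Finset.mul_sum, Finset.mul_sum]
    apply Finset.sum_nbij' (i := fun p => p.1) (j := fun k => (k, k))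
    · rintro ⟨a, b⟩ hp
      simp only [Finset.mem_filter, Finset.mem_product] at hp
      exact hp.1.1
    · intro k hk
      simp only [Finset.mem_filter, Finset.mem_product]
      exact ⟨⟨hk, hk⟩, trivial⟩
    · rintro ⟨a, b⟩ hp
      simp only [Finset.mem_filter, Finset.mem_product] at hp
      simp [hp.2]
    · intro k hk; rfl
    · rintro ⟨a, b⟩ hp
      simp only [Finset.mem_filter, Finset.mem_product] at hp
      obtain ⟨⟨ha, hb⟩, hab⟩ := hp
      subst hab
      rw [if_neg (lt_irrefl a)]
      have hca := hc a
      have he2 : (m+3) - (d + (1 - c a) + 0) = (m+1-d) + 1 + c a := by omega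
      rw [he2, hq]
      simp only []
      rw [pow_add, pow_add, pow_add]
      ring
  -- combine
  have hstrict := strict_sum m d c hc hd
  rw [← e1, e3, e4, estrict, ediag, Gop_mono]
  set S : M2 := (d : M2) * X 1 + ((m+1-d : ℕ) : M2) * X 0 with hS
  set T : M2 := (d : M2) * X 1^2 + ((m+1-d : ℕ) : M2) * X 0^2 with hT
  rw [show ∑ k ∈ s, q k = S from q_sum m d c hc hd]
  have hQ : ∑ p ∈ (s ×ˢ s).filter (fun p => p.1 < p.2), q p.1 * q p.2
      = C (1/2 : ℚ) * (S^2 - T) := by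
    rw [← hstrict, ← mul_assoc, mul_comm (C (1/2 : ℚ)) 2, hH, one_mul]
  rw [hQ]
  ring

lemma Gop_sum {α : Type} (s : Finset α) (f : α → M2) :
    Gop (∑ x ∈ s, f x) = ∑ x ∈ s, Gop (f x) := by
  unfold Gop
  simp only [map_sum, Finset.mul_sum, ← Finset.sum_add_distrib]

lemma msetOf_append_two (ms : List ℕ) :
    msetOf (ms ++ [2]) = (ms.length + 1) ::ₘ (ms.length + 1) ::ₘ msetOf ms := by
  unfold msetOf
  have hlen : (ms ++ [2]).length = ms.length + 1 := by simp
  rw [hlen, List.range_succ, List.flatMap_append]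
  have h1 : (List.range ms.length).flatMap
        (fun i => List.replicate ((ms ++ [2]).getD i 0) (i + 1))
      = (List.range ms.length).flatMap
        (fun i => List.replicate (ms.getD i 0) (i + 1)) := by
    rw [List.flatMap_def, List.flatMap_def]
    congr 1
    apply List.map_congr_left
    intro i hi
    rw [List.mem_range] at hi
    rw [List.getD_append _ _ _ _ hi]
  have h2 : ([ms.length] : List ℕ).flatMap
        (fun i => List.replicate ((ms ++ [2]).getD i 0) (i + 1))
      = [ms.length + 1, ms.length + 1] := by
    simp only [List.flatMap_cons, List.flatMap_nil, List.append_nil]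
    rw [List.getD_append_right _ _ _ _ (le_refl _), Nat.sub_self]
    rfl
  rw [h1, h2, ← Multiset.coe_add]
  rw [show ((([ms.length + 1, ms.length + 1] : List ℕ) : Multiset ℕ))
    = (ms.length + 1) ::ₘ (ms.length + 1) ::ₘ 0 from rfl]
  rw [add_comm]
  simp

lemma mem_arrangements_iff {M : Multiset ℕ} {w : List ℕ} :
    w ∈ arrangements M ↔ (w : Multiset ℕ) = M := by
  unfold arrangements
  rw [List.mem_dedup, List.mem_permutations]
  constructor
  · intro h
    rw [← M.coe_toList]
    exact Multiset.coe_eq_coe.mpr h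
  · intro h
    apply Multiset.coe_eq_coe.mp
    rw [h, M.coe_toList]

lemma coe_ins2 {w : List ℕ} {i j N : ℕ} (hij : i ≤ j) (hj : j ≤ w.length) :
    ((ins2 w i j N) : Multiset ℕ) = N ::ₘ N ::ₘ (w : Multiset ℕ) := by
  apply Multiset.coe_eq_coe.mpr
  have h1 : List.Perm ((w.insertIdx j N).insertIdx i N) (N :: w.insertIdx j N) :=
    List.perm_insertIdx _ _ (by rw [List.length_insertIdx_of_le_length hj]; omega)
  exact h1.trans ((List.perm_insertIdx _ _ hj).cons N)

/-- Adjoining a new largest letter `n+1` with multiplicity two corresponds to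
applying the operator `G`: `A_{𝐦'}(x,y) = G(A_𝐦(x,y))`. -/
theorem Abi_append_two (ms : List ℕ) (hms : ∀ i ∈ ms, 0 < i) :
    Abi (ms ++ [2]) = Gop (Abi ms) := by
  classical
  set N := ms.length + 1 with hN
  set M := msetOf ms with hMdef
  set m := M.card with hm
  -- structure of the enlarged multiset
  have hM' : msetOf (ms ++ [2]) = N ::ₘ N ::ₘ M := msetOf_append_two ms
  -- letters are < N
  have hlt : ∀ x ∈ M, x < N := by
    intro x hx
    rw [hMdef] at hx
    unfold msetOf at hx
    rw [Multiset.mem_coe, List.mem_flatMap] at hx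
    obtain ⟨i, hi, hx⟩ := hx
    rw [List.mem_replicate] at hx
    rw [List.mem_range] at hi
    omega
  have hcard' : (msetOf (ms ++ [2])).card = m + 2 := by
    rw [hM']; simp [hm]
  -- Finset versions of the sums
  have nodup1 : (arrangements M).Nodup := List.nodup_dedup _
  have nodup2 : (arrangements (msetOf (ms ++ [2]))).Nodup := List.nodup_dedup _
  have habi1 : Abi ms = ∑ w ∈ (arrangements M).toFinset,
      (X 0 : M2) ^ des w * X 1 ^ (m + 1 - des w) := by
    rw [Abi, ← hMdef, ← hm, List.sum_toFinset _ nodup1]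
  have habi2 : Abi (ms ++ [2]) = ∑ w ∈ (arrangements (msetOf (ms ++ [2]))).toFinset,
      (X 0 : M2) ^ des w * X 1 ^ (m + 3 - des w) := by
    rw [Abi, List.sum_toFinset _ nodup2, hcard']
  set T := (arrangements M).toFinset with hT
  set T' := (arrangements (msetOf (ms ++ [2]))).toFinset with hT'
  set P := ((Finset.range (m+1) ×ˢ Finset.range (m+1)).filter
    (fun p : ℕ × ℕ => p.1 ≤ p.2)) with hP
  have hmemT : ∀ w : List ℕ, w ∈ T ↔ (w : Multiset ℕ) = M := by
    intro w; rw [hT, List.mem_toFinset, mem_arrangements_iff]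
  have hmemT' : ∀ w : List ℕ, w ∈ T' ↔ (w : Multiset ℕ) = N ::ₘ N ::ₘ M := by
    intro w; rw [hT', List.mem_toFinset, mem_arrangements_iff, hM']
  have hlenT : ∀ w ∈ T, w.length = m := by
    intro w hw
    rw [hmemT] at hw
    rw [← Multiset.coe_card, hw, hm]
  have hNnotmem : ∀ w ∈ T, N ∉ w := by
    intro w hw hmem
    have := hlt N (by rw [← (hmemT w).mp hw]; exact Multiset.mem_coe.mpr hmem)
    omega
  -- the image description of T'
  have himg : T' = Finset.image
      (fun x : List ℕ × ℕ × ℕ => ins2 x.1 x.2.1 x.2.2 N) (T ×ˢ P) := by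
    apply Finset.ext
    intro w'
    constructor
    · intro hw'
      have hcnt : w'.count N = 2 := by
        have h1 := (hmemT' w').mp hw'
        have : Multiset.count N (w' : Multiset ℕ) = 2 := by
          rw [h1]
          rw [Multiset.count_cons_self, Multiset.count_cons_self]
          have : N ∉ M := fun h => by have := hlt N h; omega
          rw [Multiset.count_eq_zero_of_notMem this]
        rwa [Multiset.coe_count] at this
      obtain ⟨w, i, j, hij, hj, hwN, rfl⟩ := exists_ins2 hcnt
      have hcoe : (w : Multiset ℕ) = M := by
        have h1 := (hmemT' _).mp hw'
        rw [coe_ins2 hij hj] at h1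
        exact (Multiset.cons_inj_right N).mp ((Multiset.cons_inj_right N).mp h1)
      rw [Finset.mem_image]
      refine ⟨(w, i, j), ?_, rfl⟩
      rw [Finset.mem_product]
      refine ⟨(hmemT w).mpr hcoe, ?_⟩
      rw [hP, Finset.mem_filter, Finset.mem_product, Finset.mem_range, Finset.mem_range]
      have : w.length = m := by rw [← Multiset.coe_card, hcoe, hm]
      dsimp only
      omega
    · intro hw'
      rw [Finset.mem_image] at hw'
      obtain ⟨⟨w, i, j⟩, hx, rfl⟩ := hw'
      show ins2 w i j N ∈ T'
      rw [Finset.mem_product] at hx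
      obtain ⟨hwT, hpP⟩ := hx
      rw [hP, Finset.mem_filter, Finset.mem_product, Finset.mem_range, Finset.mem_range] at hpP
      dsimp only at hpP
      have hlen := hlenT w hwT
      rw [hmemT']
      rw [coe_ins2 hpP.2 (by omega), (hmemT w).mp hwT]
  -- injectivity
  have hinj : ∀ x ∈ T ×ˢ P, ∀ y ∈ T ×ˢ P,
      (fun x : List ℕ × ℕ × ℕ => ins2 x.1 x.2.1 x.2.2 N) x
        = (fun x : List ℕ × ℕ × ℕ => ins2 x.1 x.2.1 x.2.2 N) y → x = y := by
    rintro ⟨w, i, j⟩ hx ⟨v, p, q⟩ hy h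
    rw [Finset.mem_product] at hx hy
    rw [hP, Finset.mem_filter, Finset.mem_product, Finset.mem_range, Finset.mem_range] at hx hy
    dsimp only at hx hy
    have hlw := hlenT w hx.1
    have hlv := hlenT v hy.1
    obtain ⟨e1, e2, e3⟩ := ins2_inj (hNnotmem w hx.1) (hNnotmem v hy.1)
      hx.2.2 (by omega) hy.2.2 (by omega) h
    simp [e1, e2, e3]
  -- main computation
  rw [habi2, habi1, himg, Finset.sum_image hinj, Finset.sum_product, Gop_sum]
  apply Finset.sum_congr rfl
  intro w hw
  have hlen := hlenT w hw
  have hwlt : ∀ x ∈ w, x < N := fun x hx =>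
    hlt x (by rw [← (hmemT w).mp hw]; exact Multiset.mem_coe.mpr hx)
  have hdes : ∀ p ∈ P, des (ins2 w p.1 p.2 N)
      = des w + (1 - dsc w p.2) + (if p.1 < p.2 then 1 - dsc w p.1 else 0) := by
    rintro ⟨i, j⟩ hp
    rw [hP, Finset.mem_filter, Finset.mem_product, Finset.mem_range, Finset.mem_range] at hp
    dsimp only at hp
    exact des_ins2 hwlt (by omega) hp.2 (by omega)
  rw [Finset.sum_congr rfl (fun p hp => by rw [hdes p hp])]
  have hsum : ∑ k ∈ Finset.range (m+1), dsc w k = des w := by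
    rw [← hlen, ← des_eq_sum]
  rw [hP]
  rw [pair_sum m (des w) (dsc w) (dsc_le_one w) hsum]
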